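/- Let π ∈ NC(k) with outer classes B_1(π), …, B_o(π) (o = o(π)), listed in increasing order of minimal elements. Let D = {σ ∈ NC(k) : σ ≥ π and, for each i, the closure of the i-th outer class of σ equals cl(B_i(π))} (every σ ∈ D then has exactly o outer classes B_1(σ), …, B_o(σ)). For ρ ∈ NC(o) and σ ∈ D, define f(ρ, σ) to be the relation on [k] given by: i ~ j iff i ~σ j, or i ∈ B_s(σ) and j ∈ B_t(σ) with s ~ρ t. Then f(ρ, σ) is a noncrossing partition of [k] with f(ρ, σ) ≥ π, and f : NC(o) × D → {τ ∈ NC(k) : τ ≥ π} is a bijection. -/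

import Mathlib

open scoped Classical

noncomputable section FreeStochasticMeasures

/-! ## Partitions of `Fin k` as setoids -/

instance setoidFinFinite (k : ℕ) : Finite (Setoid (Fin k)) :=
  Finite.of_injective (fun π : Setoid (Fin k) => (π.r : Fin k → Fin k → Prop))
    (fun _ _ hab => Setoid.ext fun x y => iff_of_eq (congrFun (congrFun hab x) y))

instance setoidFinFintype (k : ℕ) : Fintype (Setoid (Fin k)) := Fintype.ofFinite _

/-- The classes of a partition of `Fin k`, as a finset of finsets. -/
def classesF {k : ℕ} (π : Setoid (Fin k)) : Finset (Finset (Fin k)) :=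
  Finset.univ.image fun i => Finset.univ.filter fun j => π.r i j

/-- A partition `π` of `Fin k` is noncrossing: there are no `i < j < l < m` with
`i ~π l`, `j ~π m` and `¬ i ~π j`. -/
def IsNC {k : ℕ} (π : Setoid (Fin k)) : Prop :=
  ∀ i j l m : Fin k, i < j → j < l → l < m → π.r i l → π.r j m → π.r i j

/-- `B` is a class of the partition `π`. -/
def IsClass {k : ℕ} (π : Setoid (Fin k)) (B : Finset (Fin k)) : Prop :=
  B ∈ classesF π

/-- `B` is an inner class of `π`: it is covered by some other class. -/
def IsInnerClass {k : ℕ} (π : Setoid (Fin k)) (B : Finset (Fin k)) : Prop :=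
  IsClass π B ∧ ∃ B' : Finset (Fin k), IsClass π B' ∧ B' ≠ B ∧
    ∃ a ∈ B', ∃ b ∈ B', ∀ c ∈ B, a < c ∧ c < b

/-- `B` is an outer class of `π`: a class which is not inner. -/
def IsOuterClass {k : ℕ} (π : Setoid (Fin k)) (B : Finset (Fin k)) : Prop :=
  IsClass π B ∧ ¬ IsInnerClass π B

/-- `Bf` enumerates the finsets satisfying `P` (e.g. the outer classes of a partition),
listed in increasing order of minimal elements. -/
def ClassEnum {k o : ℕ} (P : Finset (Fin k) → Prop) (Bf : Fin o → Finset (Fin k)) : Prop :=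
  (∀ i, P (Bf i)) ∧ (∀ B, P B → ∃ i, Bf i = B) ∧
    ∀ i j : Fin o, i < j → ∃ a ∈ Bf i, ∀ b ∈ Bf j, a < b

/-- The closure of a class: all indices lying between two of its elements. -/
def closureF {k : ℕ} (B : Finset (Fin k)) : Finset (Fin k) :=
  Finset.univ.filter fun j => ∃ a ∈ B, ∃ b ∈ B, a ≤ j ∧ j ≤ b

/-- Restriction of a partition of `Fin k` to a subset `C`, transported to `Fin C.card`
along the unique order isomorphism. -/
def restrictS {k : ℕ} (π : Setoid (Fin k)) (C : Finset (Fin k)) : Setoid (Fin C.card) :=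
  Setoid.comap (fun i => (C.orderIsoOfFin rfl i).1) π

/-- `μ` is the Möbius function of the poset `NC(k)` of noncrossing partitions of `Fin k`:
determined by `μ σ σ = 1` and the vanishing of the sums over intervals. -/
def IsNCMobius (k : ℕ) (μ : Setoid (Fin k) → Setoid (Fin k) → ℤ) : Prop :=
  (∀ σ : Setoid (Fin k), IsNC σ → μ σ σ = 1) ∧
    ∀ σ π : Setoid (Fin k), IsNC σ → IsNC π → σ < π →
      (∑ ρ ∈ Finset.univ.filter (fun ρ : Setoid (Fin k) => IsNC ρ ∧ σ ≤ ρ ∧ ρ ≤ π), μ σ ρ) = 0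

/-- `μ` is the Möbius function of the lattice of all partitions of `Fin k`. -/
def IsPMobius (k : ℕ) (μ : Setoid (Fin k) → Setoid (Fin k) → ℤ) : Prop :=
  (∀ σ : Setoid (Fin k), μ σ σ = 1) ∧
    ∀ σ π : Setoid (Fin k), σ < π →
      (∑ ρ ∈ Finset.univ.filter (fun ρ : Setoid (Fin k) => σ ≤ ρ ∧ ρ ≤ π), μ σ ρ) = 0

/-! ## Partition-indexed sums in a ring -/

section RingSums

variable {R : Type*} [Ring R]

/-- `St_π(x)`: sum over all `v` inducing exactly the partition `π`. -/
def StSumR {k N : ℕ} (x : Fin k → Fin N → R) (π : Setoid (Fin k)) : R :=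
  ∑ v ∈ Finset.univ.filter (fun v : Fin k → Fin N => ∀ i j, v i = v j ↔ π.r i j),
    (List.ofFn fun i => x i (v i)).prod

/-- `Pr_π(x)`: sum over all `v` constant on the classes of `π`. -/
def PrSumR {k N : ℕ} (x : Fin k → Fin N → R) (π : Setoid (Fin k)) : R :=
  ∑ v ∈ Finset.univ.filter (fun v : Fin k → Fin N => ∀ i j, π.r i j → v i = v j),
    (List.ofFn fun i => x i (v i)).prod

/-- Restriction of the family `x` to the rows indexed by `C`, in increasing order. -/
def restrictT {k N : ℕ} (x : Fin k → Fin N → R) (C : Finset (Fin k)) :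
    Fin C.card → Fin N → R := fun i => x (C.orderIsoOfFin rfl i).1

end RingSums

/-! ## C*-probability spaces, states, free independence -/

variable {A : Type*} [NormedRing A] [StarRing A] [CStarRing A] [NormedAlgebra ℂ A]
  [StarModule ℂ A] [CompleteSpace A]

/-- `φ` is a state: unital and positive. -/
structure IsCState (φ : A →ₗ[ℂ] ℂ) : Prop where
  map_one : φ 1 = 1
  pos : ∀ a : A, 0 ≤ (φ (star a * a)).re ∧ (φ (star a * a)).im = 0

/-- `φ` is a faithful tracial state. -/
structure IsFaithfulTracialState (φ : A →ₗ[ℂ] ℂ) : Prop where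
  map_one : φ 1 = 1
  pos : ∀ a : A, 0 ≤ (φ (star a * a)).re ∧ (φ (star a * a)).im = 0
  tracial : ∀ a b : A, φ (a * b) = φ (b * a)
  faithful : ∀ a : A, φ (star a * a) = 0 → a = 0

/-- Free independence of a family of subsets of `A` with respect to `φ`: alternating products
of centered elements of the generated unital star subalgebras are centered. -/
def FreelyIndependent (φ : A →ₗ[ℂ] ℂ) {ι : Type*} (S : ι → Set A) : Prop :=
  ∀ (m : ℕ) (idx : Fin (m + 1) → ι) (a : Fin (m + 1) → A),
    (∀ t, a t ∈ StarAlgebra.adjoin ℂ (S (idx t))) →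
    (∀ t : Fin m, idx t.castSucc ≠ idx t.succ) →
    (∀ t, φ (a t) = 0) →
    φ (List.ofFn a).prod = 0

/-- Free independence of two sets. -/
def FreelyIndependentPair (φ : A →ₗ[ℂ] ℂ) (S T : Set A) : Prop :=
  FreelyIndependent φ (fun b : Bool => cond b S T)

/-- A standard semicircular element. -/
def IsStdSemicircular (φ : A →ₗ[ℂ] ℂ) (s : A) : Prop :=
  star s = s ∧ (∀ m : ℕ, φ (s ^ (2 * m + 1)) = 0) ∧
    ∀ m : ℕ, φ (s ^ (2 * m)) = (catalan m : ℂ)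

/-! ## Moments and free cumulants -/

/-- The moment of the subfamily of `a` indexed by `B`, in increasing order. -/
def Mom {k : ℕ} (φ : A →ₗ[ℂ] ℂ) (a : Fin k → A) (B : Finset (Fin k)) : ℂ :=
  φ ((B.sort (· ≤ ·)).map a).prod

/-- `M_π(a)`: product of the moments over the classes of `π`. -/
def MomPi {k : ℕ} (φ : A →ₗ[ℂ] ℂ) (a : Fin k → A) (π : Setoid (Fin k)) : ℂ :=
  ∏ B ∈ classesF π, Mom φ a B

/-- `R_π(a)`: the free cumulant functional, via Möbius inversion over `NC(k)`
(`μ` is the Möbius function of `NC(k)`). -/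
def Rpi {k : ℕ} (φ : A →ₗ[ℂ] ℂ) (μ : Setoid (Fin k) → Setoid (Fin k) → ℤ)
    (a : Fin k → A) (π : Setoid (Fin k)) : ℂ :=
  ∑ σ ∈ Finset.univ.filter (fun σ : Setoid (Fin k) => IsNC σ ∧ σ ≤ π),
    (μ σ π : ℂ) * MomPi φ a σ

/-- `R(a_1, …, a_k)`: the free cumulant for the one-class partition. -/
def Rfull {k : ℕ} (φ : A →ₗ[ℂ] ℂ) (μ : Setoid (Fin k) → Setoid (Fin k) → ℤ)
    (a : Fin k → A) : ℂ :=
  Rpi φ μ a ⊤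

/-- The subfamily of operators indexed by `B`, in increasing order. -/
def subArgs {k : ℕ} (a : Fin k → A) (B : Finset (Fin k)) : Fin B.card → A :=
  fun i => a (B.orderIsoOfFin rfl i).1

/-! ## Half-open subintervals of `[0,1)` and subdivisions -/

/-- A half-open interval `[lo, hi) ⊆ [0,1)`. -/
structure HIv : Type where
  lo : ℝ
  hi : ℝ
  lo_nonneg : 0 ≤ lo
  lo_le_hi : lo ≤ hi
  hi_le_one : hi ≤ 1

namespace HIv

/-- The length of a half-open interval. -/
def len (I : HIv) : ℝ := I.hi - I.lo

/-- A half-open interval as a set of reals. -/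
def set (I : HIv) : Set ℝ := Set.Ico I.lo I.hi

end HIv

/-- The interval `[0,1)`. -/
def unitIv : HIv := ⟨0, 1, le_refl 0, zero_le_one, le_refl 1⟩

/-- A subdivision of the half-open interval `I` into finitely many half-open intervals,
listed in increasing order, recorded by its strictly increasing sequence of cut points. -/
structure SubdivOf (I : HIv) : Type where
  n : ℕ
  c : Fin (n + 1) → ℝ
  mono : StrictMono c
  first : c 0 = I.lo
  last : c (Fin.last n) = I.hi

namespace SubdivOf

/-- The `j`-th interval of a subdivision. -/
def piece {I : HIv} (S : SubdivOf I) (j : Fin S.n) : HIv where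
  lo := S.c j.castSucc
  hi := S.c j.succ
  lo_nonneg := by
    have h0 : S.c 0 ≤ S.c j.castSucc := S.mono.monotone (Fin.zero_le _)
    have h1 := I.lo_nonneg
    rw [S.first] at h0; linarith
  lo_le_hi := le_of_lt (S.mono Fin.castSucc_lt_succ)
  hi_le_one := by
    have h0 : S.c j.succ ≤ S.c (Fin.last S.n) := S.mono.monotone (Fin.le_last _)
    have h1 := I.hi_le_one
    rw [S.last] at h0; linarith

/-- The mesh of the subdivision is `< δ`: every piece has length `< δ`. -/
def MeshLT {I : HIv} (S : SubdivOf I) (δ : ℝ) : Prop :=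
  ∀ j : Fin S.n, (S.piece j).len < δ

end SubdivOf

/-- `L` is the operator-norm limit of `F` along the net of subdivisions of `I`
(as the mesh tends to `0`). -/
def IsSubdivLimit {I : HIv} (F : SubdivOf I → A) (L : A) : Prop :=
  ∀ ε : ℝ, 0 < ε → ∃ δ : ℝ, 0 < δ ∧ ∀ S : SubdivOf I, S.MeshLT δ → ‖F S - L‖ < ε

/-! ## Free stochastic measures -/

/-- A free stochastic measure on `(A, φ)`: a self-adjoint, uniformly bounded, additive,
stationary, continuous interval function with freely independent values on disjoint
intervals. -/
structure FSM (A : Type*) [NormedRing A] [StarRing A] [CStarRing A] [NormedAlgebra ℂ A]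
    [StarModule ℂ A] [CompleteSpace A] (φ : A →ₗ[ℂ] ℂ) : Type _ where
  val : HIv → A
  sa : ∀ I, star (val I) = val I
  bdd : ∃ C : ℝ, ∀ I, ‖val I‖ ≤ C
  add : ∀ I J K : HIv, I.hi = J.lo → K.lo = I.lo → K.hi = J.hi → val K = val I + val J
  free : ∀ {n : ℕ} (Iv : Fin n → HIv),
    (∀ i j, i ≠ j → Disjoint (Iv i).set (Iv j).set) →
    FreelyIndependent φ fun i => ({val (Iv i)} : Set A)
  stat : ∀ (m : ℕ) (I J : HIv), I.len = J.len → φ (val I ^ m) = φ (val J ^ m)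
  cont : ∀ (m : ℕ) (I : HIv) (ε : ℝ), 0 < ε → ∃ δ : ℝ, 0 < δ ∧
    ∀ J : HIv, |J.len - I.len| < δ → ‖φ (val J ^ m) - φ (val I ^ m)‖ < ε

/-- A `k`-tuple of free stochastic measures is consistent: joint free increments,
joint stationarity, and joint continuity. -/
def Consistent {k : ℕ} (φ : A →ₗ[ℂ] ℂ) (X : Fin k → FSM A φ) : Prop :=
  (∀ (n : ℕ) (u : Fin n → Fin k) (Iv : Fin n → HIv),
      (∀ i j, i ≠ j → Disjoint (Iv i).set (Iv j).set) →
      FreelyIndependent φ fun i => ({(X (u i)).val (Iv i)} : Set A)) ∧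
  (∀ (n : ℕ) (u : Fin n → Fin k) (I J : HIv), I.len = J.len →
      φ (List.ofFn fun i => (X (u i)).val I).prod
        = φ (List.ofFn fun i => (X (u i)).val J).prod) ∧
  (∀ (n : ℕ) (u : Fin n → Fin k) (I : HIv) (ε : ℝ), 0 < ε → ∃ δ : ℝ, 0 < δ ∧
      ∀ J : HIv, |J.len - I.len| < δ →
        ‖φ (List.ofFn fun i => (X (u i)).val J).prod
          - φ (List.ofFn fun i => (X (u i)).val I).prod‖ < ε)

/-! ## Riemann-type sums for stochastic measures -/

/-- `St_π(X, S)`: sum over multi-indices inducing exactly the partition `π`. -/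
def StSum {k : ℕ} (Xv : Fin k → HIv → A) (π : Setoid (Fin k)) {I : HIv}
    (S : SubdivOf I) : A :=
  ∑ v ∈ Finset.univ.filter (fun v : Fin k → Fin S.n => ∀ i j, v i = v j ↔ π.r i j),
    (List.ofFn fun i => Xv i (S.piece (v i))).prod

/-- `Pr_π(X, S)`: sum over multi-indices constant on the classes of `π`. -/
def PrSum {k : ℕ} (Xv : Fin k → HIv → A) (π : Setoid (Fin k)) {I : HIv}
    (S : SubdivOf I) : A :=
  ∑ v ∈ Finset.univ.filter (fun v : Fin k → Fin S.n => ∀ i j, π.r i j → v i = v j),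
    (List.ofFn fun i => Xv i (S.piece (v i))).prod

/-- The diagonal Riemann sum `Σ_j X^{(1)}(I_j) ⋯ X^{(k)}(I_j)`. -/
def diagSum {k : ℕ} (Xv : Fin k → HIv → A) {I : HIv} (S : SubdivOf I) : A :=
  ∑ j : Fin S.n, (List.ofFn fun i => Xv i (S.piece j)).prod

/-- The sub-tuple of interval functions indexed by `B`, in increasing order. -/
def subTupleV {k : ℕ} (Xv : Fin k → HIv → A) (B : Finset (Fin k)) :
    Fin B.card → HIv → A := fun i => Xv (B.orderIsoOfFin rfl i).1

/-- The alternating product `p Z_1 p Z_2 p ⋯ Z_k p`. -/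
def altProd {k : ℕ} (p : A) (Z : Fin k → A) : A :=
  p * (List.ofFn fun j => Z j * p).prod

/-- Lengths of the intersection `∩_{i ∈ G} I_i` of half-open intervals. -/
def interLen {n : ℕ} (Iv : Fin n → HIv) (G : Finset (Fin n)) : ℝ :=
  if h : G.Nonempty then
    max 0 ((G.inf' h fun i => (Iv i).hi) - (G.sup' h fun i => (Iv i).lo))
  else 0

/-- A free Poisson stochastic measure: all free cumulants of `Y(I)` equal `|I|`
(`μ` is a family of Möbius functions of the posets `NC(n)`). -/
def IsFreePoisson (φ : A →ₗ[ℂ] ℂ) (Y : FSM A φ)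
    (μ : (n : ℕ) → Setoid (Fin n) → Setoid (Fin n) → ℤ) : Prop :=
  ∀ n : ℕ, 1 ≤ n → ∀ I : HIv, Rfull φ (μ n) (fun _ : Fin n => Y.val I) = (I.len : ℂ)

end FreeStochasticMeasures
/-- The relation defining `f(ρ, σ)`: `i ~ j` iff `i ~σ j`, or `i ∈ B_s(σ)`, `j ∈ B_t(σ)`
with `s ~ρ t`. -/
def GlueRel {k o : ℕ} (ρ : Setoid (Fin o)) (σ : Setoid (Fin k))
    (Bσ : Fin o → Finset (Fin k)) (i j : Fin k) : Prop :=
  σ.r i j ∨ ∃ s t : Fin o, i ∈ Bσ s ∧ j ∈ Bσ t ∧ ρ.r s t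

/-- Membership of `σ` (with its enumeration `Bσ` of outer classes in increasing order of
minimal elements) in the set `D`: `σ` is noncrossing, `σ ≥ π`, and for each `i` the closure
of the `i`-th outer class of `σ` equals `cl(B_i(π))`. -/
def InD {k o : ℕ} (π : Setoid (Fin k)) (Bf : Fin o → Finset (Fin k))
    (σ : Setoid (Fin k)) (Bσ : Fin o → Finset (Fin k)) : Prop :=
  IsNC σ ∧ π ≤ σ ∧ ClassEnum (IsOuterClass σ) Bσ ∧
    ∀ i : Fin o, closureF (Bσ i) = closureF (Bf i)

section NCGlueAux

open Finset

variable {k o : ℕ}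

lemma ncg_isClass_iff (σ : Setoid (Fin k)) (B : Finset (Fin k)) :
    IsClass σ B ↔ ∃ i, B = Finset.univ.filter fun j => σ.r i j := by
  simp [IsClass, classesF, eq_comm]

lemma ncg_isClass_class (σ : Setoid (Fin k)) (i : Fin k) :
    IsClass σ (Finset.univ.filter fun j => σ.r i j) := (ncg_isClass_iff σ _).2 ⟨i, rfl⟩

lemma ncg_mem_class_self (σ : Setoid (Fin k)) (i : Fin k) :
    i ∈ Finset.univ.filter fun j => σ.r i j := by simp [σ.iseqv.refl i]

lemma ncg_rel_of_mem_class {σ : Setoid (Fin k)} {B} (hB : IsClass σ B)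
    {i j : Fin k} (hi : i ∈ B) (hj : j ∈ B) : σ.r i j := by
  rcases (ncg_isClass_iff σ B).1 hB with ⟨a, rfl⟩
  simp only [Finset.mem_filter] at hi hj
  exact σ.iseqv.trans (σ.iseqv.symm hi.2) hj.2

lemma ncg_mem_class_of_rel {σ : Setoid (Fin k)} {B} (hB : IsClass σ B)
    {i j : Fin k} (hi : i ∈ B) (hij : σ.r i j) : j ∈ B := by
  rcases (ncg_isClass_iff σ B).1 hB with ⟨a, rfl⟩
  simp only [Finset.mem_filter, Finset.mem_univ, true_and] at hi ⊢
  exact σ.iseqv.trans hi hij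

lemma ncg_class_nonempty {σ : Setoid (Fin k)} {B} (hB : IsClass σ B) : B.Nonempty := by
  rcases (ncg_isClass_iff σ B).1 hB with ⟨a, rfl⟩
  exact ⟨a, ncg_mem_class_self σ a⟩

lemma ncg_class_eq_of_mem {σ : Setoid (Fin k)} {B B'} (hB : IsClass σ B) (hB' : IsClass σ B')
    {x : Fin k} (hx : x ∈ B) (hx' : x ∈ B') : B = B' := by
  ext y
  exact ⟨fun hy => ncg_mem_class_of_rel hB' hx' (ncg_rel_of_mem_class hB hx hy),
    fun hy => ncg_mem_class_of_rel hB hx (ncg_rel_of_mem_class hB' hx' hy)⟩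

lemma ncg_mem_closureF {B : Finset (Fin k)} {j : Fin k} :
    j ∈ closureF B ↔ ∃ a ∈ B, ∃ b ∈ B, a ≤ j ∧ j ≤ b := by simp [closureF]

lemma ncg_subset_closureF (B : Finset (Fin k)) : B ⊆ closureF B :=
  fun x hx => ncg_mem_closureF.2 ⟨x, hx, x, hx, le_refl x, le_refl x⟩

lemma ncg_mem_closureF_minmax {B : Finset (Fin k)} (h : B.Nonempty) {j : Fin k} :
    j ∈ closureF B ↔ B.min' h ≤ j ∧ j ≤ B.max' h := by
  rw [ncg_mem_closureF]
  constructor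
  · rintro ⟨a, ha, b, hb, h1, h2⟩
    exact ⟨le_trans (Finset.min'_le B a ha) h1, le_trans h2 (Finset.le_max' B b hb)⟩
  · rintro ⟨h1, h2⟩
    exact ⟨_, Finset.min'_mem B h, _, Finset.max'_mem B h, h1, h2⟩

lemma ncg_closureF_trans {B X : Finset (Fin k)} (h : B ⊆ closureF X) :
    closureF B ⊆ closureF X := by
  intro j hj
  rcases ncg_mem_closureF.1 hj with ⟨a, ha, b, hb, h1, h2⟩
  rcases ncg_mem_closureF.1 (h ha) with ⟨a1, ha1, _, _, h3, _⟩
  rcases ncg_mem_closureF.1 (h hb) with ⟨_, _, b1, hb1, _, h4⟩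
  exact ncg_mem_closureF.2 ⟨a1, ha1, b1, hb1, le_trans h3 h1, le_trans h2 h4⟩

/-- L1: an outer class can absorb: if `j` lies in outer class `B` and `i ~ l` with
`i < j < l`, then `i ~ j`. -/
lemma ncg_outer_absorb {σ : Setoid (Fin k)} (hσ : IsNC σ) {B} (hB : IsOuterClass σ B)
    {i j l : Fin k} (hj : j ∈ B) (hij : i < j) (hjl : j < l) (hil : σ.r i l) : σ.r i j := by
  by_cases hex : ∃ m ∈ B, m ≤ i ∨ l ≤ m
  · rcases hex with ⟨m, hm, hmi | hlm⟩
    · rcases eq_or_lt_of_le hmi with rfl | hmi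
      · exact ncg_rel_of_mem_class hB.1 hm hj
      · have hmj : σ.r m j := ncg_rel_of_mem_class hB.1 hm hj
        have hmi' : σ.r m i := hσ m i j l hmi hij hjl hmj hil
        exact ncg_rel_of_mem_class hB.1 (ncg_mem_class_of_rel hB.1 hm hmi') hj
    · rcases eq_or_lt_of_le hlm with rfl | hlm
      · exact ncg_rel_of_mem_class hB.1
          (ncg_mem_class_of_rel hB.1 hm (σ.iseqv.symm hil)) hj
      · have hjm : σ.r j m := ncg_rel_of_mem_class hB.1 hj hm
        exact hσ i j l m hij hjl hlm hil hjm
  · exfalso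
    push_neg at hex
    apply hB.2
    refine ⟨hB.1, Finset.univ.filter fun j => σ.r i j, ncg_isClass_class σ i, ?_,
      i, ncg_mem_class_self σ i, l, ?_, ?_⟩
    · intro h
      have : i ∈ B := h ▸ ncg_mem_class_self σ i
      exact absurd (hex i this).1 (lt_irrefl i)
    · simp only [Finset.mem_filter, Finset.mem_univ, true_and]
      exact hil
    · intro c hc
      exact hex c hc
lemma ncg_sepAux {σ : Setoid (Fin k)} (hσ : IsNC σ) {B B' : Finset (Fin k)}
    (hB : IsClass σ B) (hB' : IsOuterClass σ B') (hne : B ≠ B')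
    (hBn : B.Nonempty) (hB'n : B'.Nonempty)
    (h1 : B.min' hBn < B'.min' hB'n) (h2 : B'.min' hB'n ≤ B.max' hBn) : False := by
  have hcomm : ∀ x : Fin k, x ∈ B → x ∈ B' → False := fun x hx hx' =>
    hne (ncg_class_eq_of_mem hB hB'.1 hx hx')
  have hmB := Finset.min'_mem B hBn
  have hMB := Finset.max'_mem B hBn
  have hmB' := Finset.min'_mem B' hB'n
  have hMB' := Finset.max'_mem B' hB'n
  rcases lt_trichotomy (B.max' hBn) (B'.max' hB'n) with hMM | hMM | hMM
  · -- crossing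
    rcases eq_or_lt_of_le h2 with heq | hlt
    · exact hcomm _ (heq ▸ hMB) hmB'
    · have hrel : σ.r (B.min' hBn) (B'.min' hB'n) :=
        hσ (B.min' hBn) (B'.min' hB'n) (B.max' hBn) (B'.max' hB'n) h1 hlt hMM
          (ncg_rel_of_mem_class hB hmB hMB) (ncg_rel_of_mem_class hB'.1 hmB' hMB')
      exact hcomm _ (ncg_mem_class_of_rel hB hmB hrel) hmB'
  · exact hcomm _ hMB (hMM ▸ hMB')
  · -- B' nested inside B, so inner
    apply hB'.2
    refine ⟨hB'.1, B, hB, hne, B.min' hBn, hmB, B.max' hBn, hMB, fun c hc => ?_⟩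
    exact ⟨lt_of_lt_of_le h1 (Finset.min'_le B' c hc),
      lt_of_le_of_lt (Finset.le_max' B' c hc) hMM⟩

lemma ncg_closures_disjoint {σ : Setoid (Fin k)} (hσ : IsNC σ) {B B'}
    (hB : IsOuterClass σ B) (hB' : IsOuterClass σ B') (hne : B ≠ B') {x : Fin k}
    (hx : x ∈ closureF B) (hx' : x ∈ closureF B') : False := by
  have hBn := ncg_class_nonempty hB.1
  have hB'n := ncg_class_nonempty hB'.1
  rw [ncg_mem_closureF_minmax hBn] at hx
  rw [ncg_mem_closureF_minmax hB'n] at hx'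
  rcases lt_trichotomy (B.min' hBn) (B'.min' hB'n) with h | h | h
  · exact ncg_sepAux hσ hB.1 hB' hne hBn hB'n h (le_trans hx'.1 hx.2)
  · exact hne (ncg_class_eq_of_mem hB.1 hB'.1 (Finset.min'_mem B hBn)
      (h ▸ Finset.min'_mem B' hB'n))
  · exact ncg_sepAux hσ hB'.1 hB hne.symm hB'n hBn h (le_trans hx.1 hx'.2)

lemma ncg_enum_sep {σ : Setoid (Fin k)} (hσ : IsNC σ) {Bσ : Fin o → Finset (Fin k)}
    (hE : ClassEnum (IsOuterClass σ) Bσ) {s t : Fin o} (hst : s < t)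
    {x y : Fin k} (hx : x ∈ Bσ s) (hy : y ∈ Bσ t) : x < y := by
  obtain ⟨a, ha, hab⟩ := hE.2.2 s t hst
  by_contra hcon
  push_neg at hcon
  have hBn : (Bσ s).Nonempty := ⟨x, hx⟩
  have hB'n : (Bσ t).Nonempty := ⟨y, hy⟩
  have hne : Bσ s ≠ Bσ t := fun h => absurd (hab a (h ▸ ha)) (lt_irrefl a)
  refine ncg_sepAux hσ (hE.1 s).1 (hE.1 t) hne hBn hB'n ?_ ?_
  · exact lt_of_le_of_lt (Finset.min'_le _ a ha) (hab _ (Finset.min'_mem _ hB'n))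
  · exact le_trans (Finset.min'_le _ y hy) (le_trans hcon (Finset.le_max' _ x hx))

lemma ncg_enum_injective {σ : Setoid (Fin k)} {Bσ : Fin o → Finset (Fin k)}
    (hE : ClassEnum (IsOuterClass σ) Bσ) : Function.Injective Bσ := by
  intro s t h
  by_contra hne
  rcases lt_or_gt_of_ne hne with hlt | hlt
  · obtain ⟨a, ha, hab⟩ := hE.2.2 s t hlt
    exact absurd (hab a (h ▸ ha)) (lt_irrefl a)
  · obtain ⟨a, ha, hab⟩ := hE.2.2 t s hlt
    exact absurd (hab a (h.symm ▸ ha)) (lt_irrefl a)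

lemma ncg_idx_lt {σ : Setoid (Fin k)} (hσ : IsNC σ) {Bσ : Fin o → Finset (Fin k)}
    (hE : ClassEnum (IsOuterClass σ) Bσ) {s t : Fin o} {x y : Fin k}
    (hx : x ∈ Bσ s) (hy : y ∈ Bσ t) (hxy : x < y) (hne : s ≠ t) : s < t := by
  rcases lt_or_gt_of_ne hne with h | h
  · exact h
  · exact absurd (ncg_enum_sep hσ hE h hy hx) (not_lt_of_gt hxy)
lemma ncg_inner_of_not_outer {σ : Setoid (Fin k)} {C} (hC : IsClass σ C)
    (h : ¬ IsOuterClass σ C) : IsInnerClass σ C := by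
  by_contra h'
  exact h ⟨hC, h'⟩

/-- Every class is contained in the closure of some enumerated outer class. -/
lemma ncg_class_subset_outer {σ : Setoid (Fin k)} (hσ : IsNC σ)
    {Bσ : Fin o → Finset (Fin k)} (hE : ClassEnum (IsOuterClass σ) Bσ) :
    ∀ C, IsClass σ C → ∃ t, C ⊆ closureF (Bσ t) := by
  suffices H : ∀ n (C : Finset (Fin k)), IsClass σ C →
      ∀ hn : C.Nonempty, (C.min' hn).val < n → ∃ t, C ⊆ closureF (Bσ t) by
    intro C hC
    exact H ((C.min' (ncg_class_nonempty hC)).val + 1) C hC _ (Nat.lt_succ_self _)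
  intro n
  induction n with
  | zero => exact fun C _ _ h => absurd h (Nat.not_lt_zero _)
  | succ n IH =>
    intro C hC hn hlt
    by_cases hout : IsOuterClass σ C
    · obtain ⟨t, ht⟩ := hE.2.1 C hout
      exact ⟨t, ht ▸ ncg_subset_closureF C⟩
    · obtain ⟨_, B', hB', hne, a, ha, b, hb, hcov⟩ := ncg_inner_of_not_outer hC hout
      have hB'n := ncg_class_nonempty hB'
      have hminlt : (B'.min' hB'n).val < n := by
        have h1 : B'.min' hB'n ≤ a := Finset.min'_le _ _ ha
        have h2 : a < C.min' hn := (hcov _ (Finset.min'_mem C hn)).1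
        have := lt_of_le_of_lt h1 h2
        omega
      obtain ⟨t, ht⟩ := IH B' hB' hB'n hminlt
      have hCcl : C ⊆ closureF B' := fun c hc =>
        ncg_mem_closureF.2 ⟨a, ha, b, hb, le_of_lt (hcov c hc).1, le_of_lt (hcov c hc).2⟩
      exact ⟨t, fun c hc => ncg_closureF_trans ht (hCcl hc)⟩

lemma ncg_exists_unique_idx {σ : Setoid (Fin k)} (hσ : IsNC σ)
    {Bσ : Fin o → Finset (Fin k)} (hE : ClassEnum (IsOuterClass σ) Bσ) (x : Fin k) :
    ∃! t, x ∈ closureF (Bσ t) := by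
  obtain ⟨t, ht⟩ := ncg_class_subset_outer hσ hE _ (ncg_isClass_class σ x)
  refine ⟨t, ht (ncg_mem_class_self σ x), fun t' ht' => ?_⟩
  by_contra hne
  exact ncg_closures_disjoint hσ (hE.1 t') (hE.1 t)
    (fun h => hne (ncg_enum_injective hE h)) ht' (ht (ncg_mem_class_self σ x))

lemma ncg_fin_le_apply {g : Fin o → Fin o} (h : StrictMono g) : ∀ i, i ≤ g i := by
  suffices H : ∀ n, ∀ i : Fin o, i.val ≤ n → i ≤ g i by
    exact fun i => H i.val i le_rfl
  intro n
  induction n with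
  | zero => intro i hi; rw [Fin.le_def]; omega
  | succ n IH =>
    intro i hi
    rcases Nat.lt_or_ge i.val (n + 1) with h1 | h1
    · exact IH i (by omega)
    · have hn : n < o := by have := i.isLt; omega
      have hj : (⟨n, hn⟩ : Fin o) < i := by
        rw [Fin.lt_def]; simp only [Fin.val_mk]; omega
      have h2 := h hj
      have h3 := IH ⟨n, hn⟩ le_rfl
      rw [Fin.le_def] at h3 ⊢
      rw [Fin.lt_def] at h2
      simp only [Fin.val_mk] at h2 h3
      omega

/-- Uniqueness of the increasing enumeration of outer classes. -/
lemma ncg_enum_unique {σ : Setoid (Fin k)} (hσ : IsNC σ)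
    {B1 B2 : Fin o → Finset (Fin k)} (h1 : ClassEnum (IsOuterClass σ) B1)
    (h2 : ClassEnum (IsOuterClass σ) B2) : B1 = B2 := by
  have key : ∀ (C1 C2 : Fin o → Finset (Fin k)), ClassEnum (IsOuterClass σ) C1 →
      ClassEnum (IsOuterClass σ) C2 → ∃ g : Fin o → Fin o,
      StrictMono g ∧ ∀ i, C2 (g i) = C1 i := by
    intro C1 C2 hC1 hC2
    have hg : ∀ i, ∃ j, C2 j = C1 i := fun i => hC2.2.1 _ (hC1.1 i)
    choose g hgspec using hg
    refine ⟨g, ?_, hgspec⟩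
    intro i i' hii
    obtain ⟨x, hx⟩ := ncg_class_nonempty (hC1.1 i).1
    obtain ⟨y, hy⟩ := ncg_class_nonempty (hC1.1 i').1
    have hxy : x < y := ncg_enum_sep hσ hC1 hii hx hy
    have hx2 : x ∈ C2 (g i) := (hgspec i).symm ▸ hx
    have hy2 : y ∈ C2 (g i') := (hgspec i').symm ▸ hy
    refine ncg_idx_lt hσ hC2 hx2 hy2 hxy fun he => ?_
    have : C1 i = C1 i' := by rw [← hgspec i, ← hgspec i', he]
    exact absurd (ncg_enum_sep hσ hC1 hii hx (this ▸ hx)) (lt_irrefl x)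
  obtain ⟨g, hgm, hgs⟩ := key B1 B2 h1 h2
  obtain ⟨g', hgm', hgs'⟩ := key B2 B1 h2 h1
  have hgg : ∀ i, g' (g i) = i := by
    intro i
    have : B1 (g' (g i)) = B1 i := by rw [hgs' (g i), hgs i]
    exact ncg_enum_injective h1 this
  have hid : ∀ i, g i = i := by
    intro i
    have h1' := ncg_fin_le_apply hgm i
    have h2' := ncg_fin_le_apply hgm' (g i)
    rw [hgg i] at h2'
    exact le_antisymm h2' h1'
  funext i
  rw [← hgs i, hid]
/-- Part 1: the glued relation is a noncrossing partition above `π`. -/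
lemma ncg_forward {π : Setoid (Fin k)} {Bf : Fin o → Finset (Fin k)}
    (ρ : Setoid (Fin o)) (σ : Setoid (Fin k)) (Bσ : Fin o → Finset (Fin k))
    (hρ : IsNC ρ) (hD : InD π Bf σ Bσ) :
    ∃ τ : Setoid (Fin k),
      (∀ i j, τ.r i j ↔ GlueRel ρ σ Bσ i j) ∧ IsNC τ ∧ π ≤ τ := by
  obtain ⟨hσ, hπσ, hE, _⟩ := hD
  have hrefl : ∀ i, GlueRel ρ σ Bσ i i := fun i => Or.inl (σ.iseqv.refl i)
  have hsymm : ∀ {i j}, GlueRel ρ σ Bσ i j → GlueRel ρ σ Bσ j i := by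
    rintro i j (h | ⟨s, t, hi, hj, hst⟩)
    · exact Or.inl (σ.iseqv.symm h)
    · exact Or.inr ⟨t, s, hj, hi, ρ.iseqv.symm hst⟩
  have htrans : ∀ {i j l}, GlueRel ρ σ Bσ i j → GlueRel ρ σ Bσ j l → GlueRel ρ σ Bσ i l := by
    rintro i j l (hij | ⟨s, t, hi, hj, hst⟩) (hjl | ⟨s', t', hj', hl, h'⟩)
    · exact Or.inl (σ.iseqv.trans hij hjl)
    · exact Or.inr ⟨s', t', ncg_mem_class_of_rel (hE.1 s').1 hj' (σ.iseqv.symm hij), hl, h'⟩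
    · exact Or.inr ⟨s, t, hi, ncg_mem_class_of_rel (hE.1 t).1 hj hjl, hst⟩
    · have : t = s' := ncg_enum_injective hE
        (ncg_class_eq_of_mem (hE.1 t).1 (hE.1 s').1 hj hj')
      exact Or.inr ⟨s, t', hi, hl, ρ.iseqv.trans hst (this ▸ h')⟩
  refine ⟨⟨GlueRel ρ σ Bσ, ⟨hrefl, hsymm, htrans⟩⟩, fun i j => Iff.rfl, ?_, ?_⟩
  · -- IsNC
    rintro i j l m hij hjl hlm (hil | ⟨s, t, hi, hl, hst⟩) (hjm | ⟨u, w, hj, hm, huw⟩)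
    · exact Or.inl (hσ i j l m hij hjl hlm hil hjm)
    · exact Or.inl (ncg_outer_absorb hσ (hE.1 u) hj hij hjl hil)
    · have hjl' : σ.r j l := ncg_outer_absorb hσ (hE.1 t) hl hjl hlm hjm
      exact Or.inr ⟨s, t, hi, ncg_mem_class_of_rel (hE.1 t).1 hl (σ.iseqv.symm hjl'), hst⟩
    · -- both glued
      by_cases hsu : s = u
      · exact Or.inr ⟨s, u, hi, hj, hsu ▸ ρ.iseqv.refl s⟩
      have hs_u : s < u := ncg_idx_lt hσ hE hi hj hij hsu
      by_cases hut : u = t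
      · exact Or.inr ⟨s, u, hi, hj, hut ▸ hst⟩
      have hu_t : u < t := ncg_idx_lt hσ hE hj hl hjl hut
      by_cases htw : t = w
      · exact Or.inr ⟨s, u, hi, hj, ρ.iseqv.trans hst (ρ.iseqv.symm (htw ▸ huw))⟩
      have ht_w : t < w := ncg_idx_lt hσ hE hl hm hlm htw
      exact Or.inr ⟨s, u, hi, hj, hρ s u t w hs_u hu_t ht_w hst huw⟩
  · -- π ≤ τ
    rw [Setoid.le_def]
    intro x y hxy
    exact Or.inl (Setoid.le_def.1 hπσ hxy)
lemma ncg_idx_eq_of_mem_closures {π : Setoid (Fin k)} (hπ : IsNC π)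
    {Bf : Fin o → Finset (Fin k)} (hBf : ClassEnum (IsOuterClass π) Bf)
    {s t : Fin o} {x : Fin k} (hs : x ∈ closureF (Bf s)) (ht : x ∈ closureF (Bf t)) :
    s = t := by
  by_contra hne
  exact ncg_closures_disjoint hπ (hBf.1 s) (hBf.1 t)
    (fun h => hne (ncg_enum_injective hBf h)) hs ht

/-- The partition `σ` is recoverable from `τ = f(ρ, σ)`. -/
lemma ncg_sigma_char {π : Setoid (Fin k)} (hπ : IsNC π)
    {Bf : Fin o → Finset (Fin k)} (hBf : ClassEnum (IsOuterClass π) Bf)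
    {τ : Setoid (Fin k)} (ρ : Setoid (Fin o)) (σ : Setoid (Fin k))
    (Bσ : Fin o → Finset (Fin k)) (hD : InD π Bf σ Bσ)
    (hiff : ∀ i j, τ.r i j ↔ GlueRel ρ σ Bσ i j) (i j : Fin k) :
    σ.r i j ↔ τ.r i j ∧ ∃ t, i ∈ closureF (Bf t) ∧ j ∈ closureF (Bf t) := by
  obtain ⟨hσ, hπσ, hE, hcl⟩ := hD
  constructor
  · intro hij
    refine ⟨(hiff i j).2 (Or.inl hij), ?_⟩
    obtain ⟨t, ht⟩ := ncg_class_subset_outer hσ hE _ (ncg_isClass_class σ i)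
    have hjmem : j ∈ Finset.univ.filter fun y => σ.r i y := by
      simp only [Finset.mem_filter, Finset.mem_univ, true_and]; exact hij
    exact ⟨t, hcl t ▸ ht (ncg_mem_class_self σ i), hcl t ▸ ht hjmem⟩
  · rintro ⟨hτ, t, hit, hjt⟩
    rcases (hiff i j).1 hτ with h | ⟨s, t', hi, hj, hst⟩
    · exact h
    · have hs : s = t := ncg_idx_eq_of_mem_closures hπ hBf
        (hcl s ▸ ncg_subset_closureF _ hi) hit
      have ht' : t' = t := ncg_idx_eq_of_mem_closures hπ hBf
        (hcl t' ▸ ncg_subset_closureF _ hj) hjt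
      subst hs; subst ht'
      exact ncg_rel_of_mem_class (hE.1 t').1 hi hj

lemma ncg_rho_mono (ρ ρ' : Setoid (Fin o)) (σ σ' : Setoid (Fin k)) (τ : Setoid (Fin k))
    (Bσ : Fin o → Finset (Fin k))
    (hE : ClassEnum (IsOuterClass σ) Bσ) (hE' : ClassEnum (IsOuterClass σ') Bσ)
    (hiff : ∀ i j, τ.r i j ↔ GlueRel ρ σ Bσ i j)
    (hiff' : ∀ i j, τ.r i j ↔ GlueRel ρ' σ' Bσ i j)
    {s t : Fin o} (hst : ρ.r s t) : ρ'.r s t := by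
  obtain ⟨x, hx⟩ := ncg_class_nonempty (hE.1 s).1
  obtain ⟨y, hy⟩ := ncg_class_nonempty (hE.1 t).1
  have hτ : τ.r x y := (hiff x y).2 (Or.inr ⟨s, t, hx, hy, hst⟩)
  rcases (hiff' x y).1 hτ with h | ⟨s', t', hx', hy', h'⟩
  · have : y ∈ Bσ s := ncg_mem_class_of_rel (hE'.1 s).1 hx h
    have hst' : s = t := ncg_enum_injective hE'
      (ncg_class_eq_of_mem (hE'.1 s).1 (hE'.1 t).1 this hy)
    exact hst' ▸ ρ'.iseqv.refl s
  · have h1 : s' = s := ncg_enum_injective hE'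
      (ncg_class_eq_of_mem (hE'.1 s').1 (hE'.1 s).1 hx' hx)
    have h2 : t' = t := ncg_enum_injective hE'
      (ncg_class_eq_of_mem (hE'.1 t').1 (hE'.1 t).1 hy' hy)
    exact h1 ▸ h2 ▸ h'

/-- Part 2: injectivity. -/
lemma ncg_injective_part {π : Setoid (Fin k)} (hπ : IsNC π)
    {Bf : Fin o → Finset (Fin k)} (hBf : ClassEnum (IsOuterClass π) Bf)
    (ρ₁ ρ₂ : Setoid (Fin o)) (σ₁ σ₂ τ : Setoid (Fin k))
    (Bσ₁ Bσ₂ : Fin o → Finset (Fin k))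
    (hρ₁ : IsNC ρ₁) (hρ₂ : IsNC ρ₂) (hD₁ : InD π Bf σ₁ Bσ₁) (hD₂ : InD π Bf σ₂ Bσ₂)
    (h₁ : ∀ i j, τ.r i j ↔ GlueRel ρ₁ σ₁ Bσ₁ i j)
    (h₂ : ∀ i j, τ.r i j ↔ GlueRel ρ₂ σ₂ Bσ₂ i j) :
    ρ₁ = ρ₂ ∧ σ₁ = σ₂ := by
  have hσeq : σ₁ = σ₂ := by
    apply Setoid.ext
    intro i j
    exact (ncg_sigma_char hπ hBf ρ₁ σ₁ Bσ₁ hD₁ h₁ i j).trans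
      (ncg_sigma_char hπ hBf ρ₂ σ₂ Bσ₂ hD₂ h₂ i j).symm
  have hE₁ := hD₁.2.2.1
  have hE₂ := hD₂.2.2.1
  have hE₂' : ClassEnum (IsOuterClass σ₁) Bσ₂ := hσeq ▸ hE₂
  have hBeq : Bσ₁ = Bσ₂ := ncg_enum_unique hD₁.1 hE₁ hE₂'
  refine ⟨?_, hσeq⟩
  apply Setoid.ext
  intro s t
  constructor
  · intro h
    exact ncg_rho_mono ρ₁ ρ₂ σ₁ σ₂ τ Bσ₁ hE₁ (hBeq ▸ hE₂) h₁ (hBeq ▸ h₂) h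
  · intro h
    exact ncg_rho_mono ρ₂ ρ₁ σ₂ σ₁ τ Bσ₂ hE₂ (hBeq ▸ hE₁) h₂ (hBeq ▸ h₁) h
lemma ncg_closure_sep {π : Setoid (Fin k)} (hπ : IsNC π)
    {Bf : Fin o → Finset (Fin k)} (hBf : ClassEnum (IsOuterClass π) Bf)
    {s t : Fin o} (hst : s < t) {x y : Fin k}
    (hx : x ∈ closureF (Bf s)) (hy : y ∈ closureF (Bf t)) : x < y := by
  have hsn := ncg_class_nonempty (hBf.1 s).1
  have htn := ncg_class_nonempty (hBf.1 t).1
  rw [ncg_mem_closureF_minmax hsn] at hx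
  rw [ncg_mem_closureF_minmax htn] at hy
  exact lt_of_le_of_lt hx.2 (lt_of_lt_of_le
    (ncg_enum_sep hπ hBf hst (Finset.max'_mem _ hsn) (Finset.min'_mem _ htn)) hy.1)

/-- Part 3: surjectivity. -/
lemma ncg_surjective_part {π : Setoid (Fin k)} (hπ : IsNC π)
    {Bf : Fin o → Finset (Fin k)} (hBf : ClassEnum (IsOuterClass π) Bf)
    (τ : Setoid (Fin k)) (hτ : IsNC τ) (hle : π ≤ τ) :
    ∃ (ρ : Setoid (Fin o)) (σ : Setoid (Fin k)) (Bσ : Fin o → Finset (Fin k)),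
      IsNC ρ ∧ InD π Bf σ Bσ ∧ ∀ i j, τ.r i j ↔ GlueRel ρ σ Bσ i j := by
  -- the index function c
  have hcu : ∀ x : Fin k, ∃ t, x ∈ closureF (Bf t) := by
    intro x
    obtain ⟨t, h, _⟩ := ncg_exists_unique_idx hπ hBf x
    exact ⟨t, h⟩
  choose c hcmem using hcu
  have hcuniq : ∀ {x t}, x ∈ closureF (Bf t) → c x = t := fun {x t} h =>
    (ncg_idx_eq_of_mem_closures hπ hBf (hcmem x) h)
  have hBfn : ∀ t, (Bf t).Nonempty := fun t => ncg_class_nonempty (hBf.1 t).1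
  set m : Fin o → Fin k := fun t => (Bf t).min' (hBfn t) with hm
  set M : Fin o → Fin k := fun t => (Bf t).max' (hBfn t) with hM
  have hmMτ : ∀ t, τ.r (m t) (M t) := fun t => Setoid.le_def.1 hle
    (ncg_rel_of_mem_class (hBf.1 t).1 (Finset.min'_mem _ _) (Finset.max'_mem _ _))
  have hcm : ∀ t, c (m t) = t := fun t =>
    hcuniq (ncg_subset_closureF _ (Finset.min'_mem _ _))
  have hcM : ∀ t, c (M t) = t := fun t =>
    hcuniq (ncg_subset_closureF _ (Finset.max'_mem _ _))
  have hbound : ∀ x : Fin k, m (c x) ≤ x ∧ x ≤ M (c x) := fun x =>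
    (ncg_mem_closureF_minmax (hBfn (c x))).1 (hcmem x)
  have hboundt : ∀ {x : Fin k} {t}, c x = t → m t ≤ x ∧ x ≤ M t := by
    rintro x t rfl; exact hbound x
  have hcmono : ∀ {x y : Fin k}, x ≤ y → c x ≤ c y := by
    intro x y hxy
    by_contra hcon
    push_neg at hcon
    exact absurd (ncg_closure_sep hπ hBf hcon (hcmem y) (hcmem x)) (not_lt_of_ge hxy)
  have hmlt : ∀ {s t : Fin o}, s < t → m s < m t := fun {s t} hst =>
    ncg_enum_sep hπ hBf hst (Finset.min'_mem _ _) (Finset.min'_mem _ _)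
  -- the partitions
  set σ : Setoid (Fin k) := ⟨fun i j => τ.r i j ∧ c i = c j,
    ⟨fun i => ⟨τ.iseqv.refl i, rfl⟩, fun h => ⟨τ.iseqv.symm h.1, h.2.symm⟩,
     fun h h' => ⟨τ.iseqv.trans h.1 h'.1, h.2.trans h'.2⟩⟩⟩ with hσdef
  set ρ : Setoid (Fin o) := ⟨fun s t => τ.r (m s) (m t),
    ⟨fun s => τ.iseqv.refl _, fun h => τ.iseqv.symm h, fun h h' => τ.iseqv.trans h h'⟩⟩
    with hρdef
  set Bσ : Fin o → Finset (Fin k) :=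
    fun t => Finset.univ.filter fun j => σ.r (m t) j with hBσdef
  have hmemBσ : ∀ t x, x ∈ Bσ t ↔ (τ.r (m t) x ∧ c x = t) := by
    intro t x
    simp only [hBσdef, Finset.mem_filter, Finset.mem_univ, true_and]
    show τ.r (m t) x ∧ c (m t) = c x ↔ _
    rw [hcm t]
    exact and_congr_right fun _ => eq_comm
  have hmBσ : ∀ t, m t ∈ Bσ t := fun t => (hmemBσ t _).2 ⟨τ.iseqv.refl _, hcm t⟩
  have hMBσ : ∀ t, M t ∈ Bσ t := fun t => (hmemBσ t _).2 ⟨hmMτ t, hcM t⟩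
  -- the key sublemma
  have star : ∀ i j : Fin k, τ.r i j → i < j → c i ≠ c j →
      τ.r (m (c i)) i ∧ τ.r (m (c j)) j := by
    intro i j hij hlt hne
    have hst : c i < c j := lt_of_le_of_ne (hcmono (le_of_lt hlt)) hne
    obtain ⟨hi1, hi2⟩ := hbound i
    obtain ⟨hj1, hj2⟩ := hbound j
    have hMm : M (c i) < m (c j) :=
      ncg_enum_sep hπ hBf hst (Finset.max'_mem _ _) (Finset.min'_mem _ _)
    constructor
    · rcases eq_or_lt_of_le hi1 with heq | h1
      · rw [heq]
      · rcases eq_or_lt_of_le hi2 with heq | h2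
        · have h0 := hmMτ (c i)
          rw [← heq] at h0
          exact h0
        · exact hτ (m (c i)) i (M (c i)) j h1 h2 (lt_of_lt_of_le hMm hj1)
            (hmMτ (c i)) hij
    · rcases eq_or_lt_of_le hj1 with heq | h1
      · rw [heq]
      · rcases eq_or_lt_of_le hj2 with heq | h2
        · have h0 := hmMτ (c j)
          rw [← heq] at h0
          exact h0
        · have h3 : τ.r i (m (c j)) :=
            hτ i (m (c j)) j (M (c j)) (lt_of_le_of_lt hi2 hMm) h1 h2 hij (hmMτ (c j))
          exact τ.iseqv.trans (τ.iseqv.symm h3) hij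
  -- IsNC ρ
  have hρNC : IsNC ρ := by
    intro s u t w hsu hut htw h1 h2
    exact hτ (m s) (m u) (m t) (m w) (hmlt hsu) (hmlt hut) (hmlt htw) h1 h2
  -- IsNC σ
  have hσNC : IsNC σ := by
    rintro i j l n hij hjl hln ⟨h1, e1⟩ ⟨h2, e2⟩
    refine ⟨hτ i j l n hij hjl hln h1 h2, ?_⟩
    have a1 : c i ≤ c j := hcmono (le_of_lt hij)
    have a2 : c j ≤ c l := hcmono (le_of_lt hjl)
    exact le_antisymm a1 (le_trans a2 (le_of_eq e1.symm))
  -- π ≤ σ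
  have hπσ : π ≤ σ := by
    rw [Setoid.le_def]
    intro x y hxy
    refine ⟨Setoid.le_def.1 hle hxy, ?_⟩
    obtain ⟨t, ht⟩ := ncg_class_subset_outer hπ hBf _ (ncg_isClass_class π x)
    have hy : y ∈ Finset.univ.filter fun z => π.r x z := by
      simp only [Finset.mem_filter, Finset.mem_univ, true_and]; exact hxy
    rw [hcuniq (ht (ncg_mem_class_self π x)), hcuniq (ht hy)]
  -- outer classes of σ
  have houter : ∀ t, IsOuterClass σ (Bσ t) := by
    intro t
    refine ⟨ncg_isClass_class σ (m t), ?_⟩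
    rintro ⟨_, B', hB', hne, a, ha, b, hb, hcov⟩
    have hab : σ.r a b := ncg_rel_of_mem_class hB' ha hb
    have ham : a < m t := (hcov _ (hmBσ t)).1
    have hMb : M t < b := (hcov _ (hMBσ t)).2
    have hca : c a < t := by
      rcases eq_or_lt_of_le (hcmono (le_of_lt ham)) with heq | h
      · exfalso
        have := (hboundt (heq.trans (hcm t))).1
        exact absurd ham (not_lt_of_ge this)
      · exact lt_of_lt_of_le h (le_of_eq (hcm t))
    have hcb : t ≤ c b := by
      have := hcmono (le_of_lt hMb)
      rw [hcM t] at this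
      exact this
    exact absurd hab.2 (by omega)
  have hsurjB : ∀ B, IsOuterClass σ B → ∃ t, Bσ t = B := by
    intro B hB
    obtain ⟨x, hx⟩ := ncg_class_nonempty hB.1
    have hcB : ∀ y ∈ B, c y = c x := fun y hy =>
      (ncg_rel_of_mem_class hB.1 hx hy).2.symm
    set t := c x with htdef
    have hmt : m t ∈ B := by
      by_contra hmt
      have hMt : M t ∉ B := by
        intro hMt
        have : σ.r (M t) (m t) := ⟨τ.iseqv.symm (hmMτ t), (hcM t).trans (hcm t).symm⟩
        exact hmt (ncg_mem_class_of_rel hB.1 hMt this)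
      apply hB.2
      refine ⟨hB.1, Bσ t, ncg_isClass_class σ (m t), ?_, m t, hmBσ t, M t, hMBσ t,
        fun y hy => ?_⟩
      · intro h
        exact hmt (h ▸ hmBσ t)
      · obtain ⟨hy1, hy2⟩ := hboundt (hcB y hy)
        exact ⟨lt_of_le_of_ne hy1 fun h => hmt (h ▸ hy),
          lt_of_le_of_ne hy2 fun h => hMt (h ▸ hy)⟩
    exact ⟨t, (ncg_class_eq_of_mem hB.1 (ncg_isClass_class σ (m t)) hmt (hmBσ t)).symm⟩
  have horder : ∀ s t : Fin o, s < t → ∃ a ∈ Bσ s, ∀ b ∈ Bσ t, a < b := by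
    intro s t hst
    refine ⟨m s, hmBσ s, fun b hb => ?_⟩
    have := ((hmemBσ t b).1 hb).2
    exact ncg_closure_sep hπ hBf hst (ncg_subset_closureF _ (Finset.min'_mem _ _))
      (this ▸ hcmem b)
  have hE : ClassEnum (IsOuterClass σ) Bσ := ⟨houter, hsurjB, horder⟩
  -- closures agree
  have hclos : ∀ t, closureF (Bσ t) = closureF (Bf t) := by
    intro t
    have hBσn : (Bσ t).Nonempty := ⟨m t, hmBσ t⟩
    have hmin : (Bσ t).min' hBσn = m t :=
      le_antisymm (Finset.min'_le _ _ (hmBσ t))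
        (hboundt ((hmemBσ t _).1 (Finset.min'_mem _ hBσn)).2).1
    have hmax : (Bσ t).max' hBσn = M t :=
      le_antisymm (hboundt ((hmemBσ t _).1 (Finset.max'_mem _ hBσn)).2).2
        (Finset.le_max' _ _ (hMBσ t))
    ext j
    rw [ncg_mem_closureF_minmax hBσn, ncg_mem_closureF_minmax (hBfn t), hmin, hmax]
  refine ⟨ρ, σ, Bσ, hρNC, ⟨hσNC, hπσ, hE, hclos⟩, ?_⟩
  -- the glue identity
  intro i j
  constructor
  · intro h
    by_cases hcc : c i = c j
    · exact Or.inl ⟨h, hcc⟩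
    · rcases lt_or_gt_of_ne (fun he : i = j => hcc (he ▸ rfl)) with hlt | hlt
      · obtain ⟨h1, h2⟩ := star i j h hlt hcc
        exact Or.inr ⟨c i, c j, (hmemBσ _ _).2 ⟨h1, rfl⟩, (hmemBσ _ _).2 ⟨h2, rfl⟩,
          τ.iseqv.trans (τ.iseqv.trans h1 h) (τ.iseqv.symm h2)⟩
      · obtain ⟨h1, h2⟩ := star j i (τ.iseqv.symm h) hlt (Ne.symm hcc)
        exact Or.inr ⟨c i, c j, (hmemBσ _ _).2 ⟨h2, rfl⟩, (hmemBσ _ _).2 ⟨h1, rfl⟩,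
          τ.iseqv.trans (τ.iseqv.trans h2 h) (τ.iseqv.symm h1)⟩
  · rintro (h | ⟨s, t, hi, hj, hst⟩)
    · exact h.1
    · have h1 := ((hmemBσ s i).1 hi).1
      have h2 := ((hmemBσ t j).1 hj).1
      exact τ.iseqv.trans (τ.iseqv.trans (τ.iseqv.symm h1) hst) h2

end NCGlueAux

/-- `f(ρ, σ)` is a noncrossing partition `≥ π`, and `f : NC(o) × D → {τ ∈ NC(k) : τ ≥ π}`
is a bijection. -/
theorem glue_bijection
    (k o : ℕ) (hk : 1 ≤ k) (π : Setoid (Fin k)) (hπ : IsNC π)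
    (Bf : Fin o → Finset (Fin k)) (hBf : ClassEnum (IsOuterClass π) Bf) :
    (∀ (ρ : Setoid (Fin o)) (σ : Setoid (Fin k)) (Bσ : Fin o → Finset (Fin k)),
        IsNC ρ → InD π Bf σ Bσ →
        ∃ τ : Setoid (Fin k),
          (∀ i j, τ.r i j ↔ GlueRel ρ σ Bσ i j) ∧ IsNC τ ∧ π ≤ τ) ∧
    (∀ (ρ₁ ρ₂ : Setoid (Fin o)) (σ₁ σ₂ τ : Setoid (Fin k))
        (Bσ₁ Bσ₂ : Fin o → Finset (Fin k)),
        IsNC ρ₁ → IsNC ρ₂ → InD π Bf σ₁ Bσ₁ → InD π Bf σ₂ Bσ₂ →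
        (∀ i j, τ.r i j ↔ GlueRel ρ₁ σ₁ Bσ₁ i j) →
        (∀ i j, τ.r i j ↔ GlueRel ρ₂ σ₂ Bσ₂ i j) →
        ρ₁ = ρ₂ ∧ σ₁ = σ₂) ∧
    (∀ τ : Setoid (Fin k), IsNC τ → π ≤ τ →
        ∃ (ρ : Setoid (Fin o)) (σ : Setoid (Fin k)) (Bσ : Fin o → Finset (Fin k)),
          IsNC ρ ∧ InD π Bf σ Bσ ∧ ∀ i j, τ.r i j ↔ GlueRel ρ σ Bσ i j) := by
  refine ⟨fun ρ σ Bσ hρ hD => ncg_forward ρ σ Bσ hρ hD,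
    fun ρ₁ ρ₂ σ₁ σ₂ τ Bσ₁ Bσ₂ hρ₁ hρ₂ hD₁ hD₂ h₁ h₂ =>
      ncg_injective_part hπ hBf ρ₁ ρ₂ σ₁ σ₂ τ Bσ₁ Bσ₂ hρ₁ hρ₂ hD₁ hD₂ h₁ h₂,
    fun τ hτ hle => ncg_surjective_part hπ hBf τ hτ hle⟩
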